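/- Let X ⊆ ℝ^O be a set indexed by a class Π via π ↦ x(π), let M ∈ ℝ^{S×O}, and fix η > 0. Assume that for every x ∈ X, the total negative mass Σ_{s} [(M·x)(s)]₋ ≤ η/(4O²). Suppose x(π¹),…,x(π^O) form a 2-approximate barycentric spanner of X: every x ∈ X equals Σ_{o=1}^O α_o x(π^o) with α_o ∈ [−2,2]. Then for every subset S' ⊆ [S] such that some π ∈ Π satisfies Σ_{s∈S'} ⟨e_s, M·x(π)⟩ ≥ η, the uniform mixture satisfies Σ_{s∈S'} ⟨e_s, M·(x(π¹)+⋯+x(π^O))/O⟩ ≥ η/(4O²). -/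

import Mathlib

/-- Main barycentric-spanner exploration lemma: if every `M·x(π)` has total negative mass
at most `η/(4O²)` and `x(π¹),…,x(π^O)` is a 2-approximate barycentric spanner of
`{x(π) : π}`, then for any subset `S'` on which some `π` achieves mass at least `η`,
the uniform mixture of the spanner policies achieves mass at least `η/(4O²)` on `S'`. -/
theorem spanner_mixture_explores {S O : ℕ} (η : ℝ) (hη : 0 < η)
    (M : Matrix (Fin S) (Fin O) ℝ) {Pol : Type*} (x : Pol → (Fin O → ℝ))
    (hneg : ∀ π : Pol, ∑ s, max (-(M.mulVec (x π) s)) 0 ≤ η / (4 * O ^ 2))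
    (sp : Fin O → Pol)
    (hspanner : ∀ π : Pol, ∃ α : Fin O → ℝ, (∀ o, |α o| ≤ 2) ∧
      x π = ∑ o, α o • x (sp o)) :
    ∀ S' : Finset (Fin S), (∃ π : Pol, η ≤ ∑ s ∈ S', M.mulVec (x π) s) →
      η / (4 * O ^ 2) ≤ ∑ s ∈ S', (∑ o, M.mulVec (x (sp o)) s) / O := by
  intro S' ⟨π, hπ⟩
  obtain ⟨α, hα, hx⟩ := hspanner π
  set T : Fin O → ℝ := fun o => ∑ s ∈ S', M.mulVec (x (sp o)) s with hTdef
  have hlow : ∀ ρ : Pol, -(η / (4 * O ^ 2)) ≤ ∑ s ∈ S', M.mulVec (x ρ) s := by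
    intro ρ
    have h1 : ∀ s, -(max (-(M.mulVec (x ρ) s)) 0) ≤ M.mulVec (x ρ) s := by
      intro s
      have := le_max_left (-(M.mulVec (x ρ) s)) 0
      linarith
    have h2 : ∑ s ∈ S', max (-(M.mulVec (x ρ) s)) 0 ≤ ∑ s, max (-(M.mulVec (x ρ) s)) 0 := by
      apply Finset.sum_le_sum_of_subset_of_nonneg (Finset.subset_univ _)
      intro s _ _; exact le_max_right _ _
    calc -(η / (4 * O ^ 2)) ≤ -(∑ s ∈ S', max (-(M.mulVec (x ρ) s)) 0) := by
          have := (h2.trans (hneg ρ)); linarith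
      _ = ∑ s ∈ S', -(max (-(M.mulVec (x ρ) s)) 0) := by rw [Finset.sum_neg_distrib]
      _ ≤ ∑ s ∈ S', M.mulVec (x ρ) s := Finset.sum_le_sum fun s _ => h1 s
  have hT : ∀ o, -(η / (4 * O ^ 2)) ≤ T o := fun o => hlow (sp o)
  have hlin : M.mulVec (∑ o, α o • x (sp o)) = ∑ o, α o • M.mulVec (x (sp o)) := by
    simp only [← Matrix.mulVecLin_apply, map_sum, map_smul]
  have hkey : ∑ s ∈ S', M.mulVec (x π) s = ∑ o, α o * T o := by
    rw [hx, hlin]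
    simp only [Finset.sum_apply, Pi.smul_apply, smul_eq_mul]
    rw [Finset.sum_comm]
    simp [hTdef, Finset.mul_sum]
  have hgoal : ∑ s ∈ S', (∑ o, M.mulVec (x (sp o)) s) / O = (∑ o, T o) / O := by
    rw [← Finset.sum_div, Finset.sum_comm]
  rw [hgoal]
  have hπ' : η ≤ ∑ o, α o * T o := hkey ▸ hπ
  clear hkey hgoal hlin hx hπ hlow hneg hspanner hTdef
  rcases Nat.eq_zero_or_pos O with hO | hO
  · subst hO
    simp at hπ' ⊢
  rcases eq_or_lt_of_le (Nat.succ_le_of_lt hO) with hO1 | hO2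
  · -- O = 1
    have : O = 1 := hO1.symm
    subst this
    simp only [Fin.sum_univ_one] at hπ' ⊢
    have hT0 := hT 0
    have hab := abs_le.mp (hα 0)
    push_cast at hT0 ⊢
    norm_num at hT0 ⊢
    rcases le_total 0 (T 0) with hs | hs
    · nlinarith [mul_nonneg (by linarith [hab.2] : (0:ℝ) ≤ 2 - α 0) hs]
    · nlinarith [mul_nonpos_of_nonneg_of_nonpos (by linarith [hab.1] : (0:ℝ) ≤ α 0 + 2) hs]
  · -- O ≥ 2
    have hn : (2:ℝ) ≤ (O:ℝ) := by exact_mod_cast hO2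
    have hn0 : (0:ℝ) < (O:ℝ) := by linarith
    have hbound : ∀ o, α o * T o ≤ 2 * T o + 4 * max (-(T o)) 0 := by
      intro o
      have hab := abs_le.mp (hα o)
      rcases le_total 0 (T o) with hs | hs
      · have : max (-(T o)) 0 = 0 := max_eq_right (by linarith)
        rw [this]
        nlinarith [mul_nonneg (by linarith [hab.2] : (0:ℝ) ≤ 2 - α o) hs]
      · have : max (-(T o)) 0 = -(T o) := max_eq_left (by linarith)
        rw [this]
        nlinarith [mul_nonpos_of_nonneg_of_nonpos (by linarith [hab.1] : (0:ℝ) ≤ α o + 2) hs]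
    have hmax : ∀ o, max (-(T o)) 0 ≤ η / (4 * O ^ 2) := by
      intro o
      apply max_le
      · linarith [hT o]
      · positivity
    have hsum : η ≤ 2 * (∑ o, T o) + 4 * (O * (η / (4 * O ^ 2))) := by
      calc η ≤ ∑ o, α o * T o := hπ'
        _ ≤ ∑ o, (2 * T o + 4 * max (-(T o)) 0) := Finset.sum_le_sum fun o _ => hbound o
        _ = 2 * (∑ o, T o) + 4 * ∑ o, max (-(T o)) 0 := by
            rw [Finset.sum_add_distrib, ← Finset.mul_sum, ← Finset.mul_sum]
        _ ≤ 2 * (∑ o, T o) + 4 * (O * (η / (4 * O ^ 2))) := by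
            have : ∑ o, max (-(T o)) 0 ≤ (O : ℝ) * (η / (4 * O ^ 2)) := by
              calc ∑ o, max (-(T o)) 0 ≤ ∑ _o : Fin O, η / (4 * O ^ 2) :=
                    Finset.sum_le_sum fun o _ => hmax o
                _ = (O : ℝ) * (η / (4 * O ^ 2)) := by simp [Finset.sum_const]
            linarith
    set A := ∑ o, T o
    have he : 4 * ((O:ℝ) * (η / (4 * O ^ 2))) = η / O := by
      field_simp
    rw [he] at hsum
    rw [div_le_div_iff₀ (by positivity) hn0]
    have hd : (η / O) * O = η := div_mul_cancel₀ η (ne_of_gt hn0)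
    nlinarith [mul_le_mul_of_nonneg_right hsum (le_of_lt hn0), hd, mul_pos hη hn0,
      mul_pos (mul_pos hη hn0) hn0]
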